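/- arXiv:2111.07425 — 2 statements merged into one kernel-verified Lean document; each statement's English description precedes it below -/
import Mathlib

section
/- Let G and H be connected graphs and let R ⊆ V(G □ H) satisfy: (i) for each (g,h) ∈ R, either the H-layer through g intersects R only in (g,h), or the G-layer through h intersects R only in (g,h); and (ii) the projections π_G(R) and π_H(R) are general position sets of G and H respectively. Then R is a general position set of G □ H. -/
open SimpleGraph

/-- The interval `I_G[u,v]`: vertices lying on some shortest `u,v`-path. -/
def gpInterval {V : Type*} (G : SimpleGraph V) (u v : V) : Set V :=
  {x | ∃ p : G.Walk u v, p.length = G.dist u v ∧ x ∈ p.support}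

/-- A general position set: no three (distinct) vertices of `S` lie on a common
shortest path. -/
def IsGPSet {V : Type*} (G : SimpleGraph V) (S : Set V) : Prop :=
  ∀ u ∈ S, ∀ v ∈ S, ∀ w ∈ S, u ≠ v → v ≠ w → u ≠ w → v ∉ gpInterval G u w

/-- A maximal general position set. -/
def IsMaximalGPSet {V : Type*} (G : SimpleGraph V) (S : Set V) : Prop :=
  IsGPSet G S ∧ ∀ T : Set V, IsGPSet G T → S ⊆ T → T = S

/-- The general position number of a graph. -/
noncomputable def gpNumber {V : Type*} (G : SimpleGraph V) : ℕ :=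
  sSup {n : ℕ | ∃ S : Finset V, IsGPSet G ↑S ∧ S.card = n}

/-- The lexicographic product of two simple graphs. -/
def lexProd {α β : Type*} (G : SimpleGraph α) (H : SimpleGraph β) :
    SimpleGraph (α × β) where
  Adj x y := G.Adj x.1 y.1 ∨ (x.1 = y.1 ∧ H.Adj x.2 y.2)
  symm := by
    refine ⟨?_⟩
    intro x y h
    rcases h with h | ⟨h1, h2⟩
    · exact Or.inl h.symm
    · exact Or.inr ⟨h1.symm, h2.symm⟩
  loopless := by
    refine ⟨?_⟩
    intro x h
    rcases h with h | ⟨_, h2⟩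
    · exact G.irrefl h
    · exact H.irrefl h2

open Classical in
/-- Project a walk on `G □ H` to `G`, collapsing `H`-steps. -/
noncomputable def projL {α β : Type*} {G : SimpleGraph α} {H : SimpleGraph β} :
    ∀ {x y : α × β}, (G □ H).Walk x y → G.Walk x.1 y.1
  | _, _, .nil => .nil
  | x, _, .cons (v := m) h w =>
      if hg : G.Adj x.1 m.1 ∧ x.2 = m.2 then .cons hg.1 (projL w)
      else (projL w).copy (((boxProd_adj.mp h).resolve_left hg).2).symm rfl

open Classical in
/-- Project a walk on `G □ H` to `H`, collapsing `G`-steps. -/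
noncomputable def projR {α β : Type*} {G : SimpleGraph α} {H : SimpleGraph β} :
    ∀ {x y : α × β}, (G □ H).Walk x y → H.Walk x.2 y.2
  | _, _, .nil => .nil
  | x, _, .cons (v := m) h w =>
      if hh : H.Adj x.2 m.2 ∧ x.1 = m.1 then .cons hh.1 (projR w)
      else (projR w).copy (((boxProd_adj.mp h).symm.resolve_left hh).2).symm rfl

lemma projLR_length {α β : Type*} {G : SimpleGraph α} {H : SimpleGraph β}
    {x y : α × β} (p : (G □ H).Walk x y) :
    (projL p).length + (projR p).length = p.length := by
  induction p with
  | nil => simp [projL, projR]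
  | cons h w ih =>
    rw [projL, projR]
    split_ifs with h1 h2 h2 <;>
      simp only [Walk.length_cons, Walk.length_copy] <;> try omega
    · exact absurd (h1.2 ▸ h2.1) (H.irrefl)
    · exact absurd ((boxProd_adj.mp h).resolve_left h1) h2


/-- a sufficient condition for a set to be a general position set
of a Cartesian product. -/
theorem stmt8 {α β : Type*} (G : SimpleGraph α) (H : SimpleGraph β)
    (hG : G.Connected) (hH : H.Connected) (R : Set (α × β))
    (hlayer : ∀ x ∈ R, (∀ y ∈ R, y.1 = x.1 → y = x) ∨ (∀ y ∈ R, y.2 = x.2 → y = x))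
    (hprojG : IsGPSet G (Prod.fst '' R)) (hprojH : IsGPSet H (Prod.snd '' R)) :
    IsGPSet (G □ H) R := by
  classical
  rintro u hu v hv w hw huv hvw huw ⟨p, hlen, hsup⟩
  set q1 := p.takeUntil v hsup with hq1
  set q2 := p.dropUntil v hsup with hq2
  have hq : q1.append q2 = p := p.take_spec hsup
  have hlen12 : q1.length + q2.length = p.length := by
    rw [← hq, Walk.length_append]
  -- upper bound on dist in the box product
  obtain ⟨pg, hpg⟩ := hG.exists_walk_length_eq_dist u.1 w.1
  obtain ⟨ph, hph⟩ := hH.exists_walk_length_eq_dist u.2 w.2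
  have hub : (G □ H).dist u w ≤ G.dist u.1 w.1 + H.dist u.2 w.2 := by
    have h := SimpleGraph.dist_le ((pg.boxProdLeft H u.2).append (ph.boxProdRight G w.1))
    have e1 : (pg.boxProdLeft H u.2).length = pg.length := Walk.length_map _ _
    have e2 : (ph.boxProdRight G w.1).length = ph.length := Walk.length_map _ _
    rw [Walk.length_append, e1, e2] at h
    simp only [Walk.length_append, Walk.boxProdLeft, Walk.boxProdRight,
      Walk.length_map, hpg, hph, Prod.mk.eta] at h
    exact h
  have a1 : G.dist u.1 v.1 ≤ (projL q1).length := SimpleGraph.dist_le _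
  have a2 : G.dist v.1 w.1 ≤ (projL q2).length := SimpleGraph.dist_le _
  have b1 : H.dist u.2 v.2 ≤ (projR q1).length := SimpleGraph.dist_le _
  have b2 : H.dist v.2 w.2 ≤ (projR q2).length := SimpleGraph.dist_le _
  have trg : G.dist u.1 w.1 ≤ G.dist u.1 v.1 + G.dist v.1 w.1 := hG.dist_triangle
  have trh : H.dist u.2 w.2 ≤ H.dist u.2 v.2 + H.dist v.2 w.2 := hH.dist_triangle
  have l1 := projLR_length q1
  have l2 := projLR_length q2
  -- equalities
  have hEg : G.dist u.1 v.1 + G.dist v.1 w.1 = G.dist u.1 w.1 := by omega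
  have hEh : H.dist u.2 v.2 + H.dist v.2 w.2 = H.dist u.2 w.2 := by omega
  have hAg : (projL q1).length + (projL q2).length = G.dist u.1 w.1 := by omega
  have hAh : (projR q1).length + (projR q2).length = H.dist u.2 w.2 := by omega
  have I1 : v.1 ∈ gpInterval G u.1 w.1 := by
    refine ⟨(projL q1).append (projL q2), by rw [Walk.length_append]; omega, ?_⟩
    exact Walk.subset_support_append_left _ _ ((projL q1).end_mem_support)
  have I2 : v.2 ∈ gpInterval H u.2 w.2 := by
    refine ⟨(projR q1).append (projR q2), by rw [Walk.length_append]; omega, ?_⟩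
    exact Walk.subset_support_append_left _ _ ((projR q1).end_mem_support)
  have key1 : v.1 = u.1 ∨ v.1 = w.1 := by
    by_contra hc
    push_neg at hc
    have huw1 : u.1 ≠ w.1 := by
      intro he
      have h0 : G.dist u.1 w.1 = 0 := by rw [he, SimpleGraph.dist_self]
      have : G.dist u.1 v.1 = 0 := by omega
      exact hc.1 ((hG.dist_eq_zero_iff.mp this).symm)
    exact hprojG u.1 ⟨u, hu, rfl⟩ v.1 ⟨v, hv, rfl⟩ w.1 ⟨w, hw, rfl⟩
      (fun he => hc.1 he.symm) hc.2 huw1 I1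
  have key2 : v.2 = u.2 ∨ v.2 = w.2 := by
    by_contra hc
    push_neg at hc
    have huw2 : u.2 ≠ w.2 := by
      intro he
      have h0 : H.dist u.2 w.2 = 0 := by rw [he, SimpleGraph.dist_self]
      have : H.dist u.2 v.2 = 0 := by omega
      exact hc.1 ((hH.dist_eq_zero_iff.mp this).symm)
    exact hprojH u.2 ⟨u, hu, rfl⟩ v.2 ⟨v, hv, rfl⟩ w.2 ⟨w, hw, rfl⟩
      (fun he => hc.1 he.symm) hc.2 huw2 I2
  rcases key1 with k1 | k1 <;> rcases key2 with k2 | k2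
  · exact huv (Prod.ext k1.symm k2.symm)
  · rcases hlayer v hv with hA | hB
    · exact huv (hA u hu k1.symm)
    · exact hvw ((hB w hw k2.symm).symm)
  · rcases hlayer v hv with hA | hB
    · exact hvw ((hA w hw k1.symm).symm)
    · exact huv (hB u hu k2.symm)
  · exact hvw (Prod.ext k1 k2)
end

section
/- If G and H are connected graphs and S is a general position set of the lexicographic product G ∘ H, then the projection π_G(S) is a general position set of G. -/
open SimpleGraph

/-- Graph hom `G → G ∘ H` sending `g` to `(g, b)`. -/
def lexHom {α β : Type*} (G : SimpleGraph α) (H : SimpleGraph β) (b : β) :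
    G →g lexProd G H where
  toFun g := (g, b)
  map_rel' h := Or.inl h

lemma dist_fst_le_walk_length {α β : Type*} (G : SimpleGraph α) (H : SimpleGraph β)
    (hG : G.Connected) : ∀ {x y : α × β} (q : (lexProd G H).Walk x y),
    G.dist x.1 y.1 ≤ q.length := by
  intro x y q
  induction q with
  | nil => simp
  | @cons a c d h q ih =>
    rcases h with h | ⟨h1, _⟩
    · calc G.dist a.1 d.1 ≤ G.dist a.1 c.1 + G.dist c.1 d.1 := hG.dist_triangle
        _ ≤ 1 + q.length := by
            have : G.dist a.1 c.1 ≤ 1 := by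
              simpa using G.dist_le (Walk.cons h Walk.nil)
            omega
        _ = (Walk.cons (Or.inl h) q).length := Nat.add_comm _ _
    · rw [← h1] at ih
      change _ ≤ q.length + 1
      omega

/-- the projection to `G` of a general position set of the
lexicographic product `G ∘ H` is a general position set of `G`. -/
theorem stmt13 {α β : Type*} (G : SimpleGraph α) (H : SimpleGraph β)
    (hG : G.Connected) (hH : H.Connected) (S : Set (α × β))
    (hS : IsGPSet (lexProd G H) S) :
    IsGPSet G (Prod.fst '' S) := by
  classical
  rintro u ⟨⟨u', b1⟩, hu'S, rfl⟩ v ⟨⟨v', b2⟩, hv'S, rfl⟩ w ⟨⟨w', b3⟩, hw'S, rfl⟩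
    huv hvw huw ⟨p, hplen, hvp⟩
  dsimp only at *
  -- split p at v'
  obtain ⟨x1, h1, p1, hp1⟩ := (p.takeUntil v' hvp).exists_eq_cons_of_ne huv
  obtain ⟨x2, h2, p2, hp2⟩ := (p.dropUntil v' hvp).exists_eq_cons_of_ne hvw
  -- lifted walk
  set L : (lexProd G H).Walk (u', b1) (w', b3) :=
    (Walk.cons (show (lexProd G H).Adj (u', b1) (x1, b2) from Or.inl h1)
      (p1.map (lexHom G H b2))).append
    (Walk.cons (show (lexProd G H).Adj (v', b2) (x2, b3) from Or.inl h2)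
      (p2.map (lexHom G H b3))) with hL
  have hLlen : L.length = p.length := by
    have := congrArg Walk.length (p.take_spec hvp)
    rw [hp1, hp2] at this
    simp only [hL, Walk.length_append, Walk.length_cons, Walk.length_map] at this ⊢
    change (p1.map (lexHom G H b2)).length + 1 + ((p2.map (lexHom G H b3)).length + 1) = p.length
    rw [Walk.length_map, Walk.length_map]
    omega
  have hdist : (lexProd G H).dist (u', b1) (w', b3) = G.dist u' w' := by
    refine le_antisymm ?_ ?_
    · calc (lexProd G H).dist (u', b1) (w', b3) ≤ L.length := SimpleGraph.dist_le L
        _ = G.dist u' w' := by rw [hLlen, hplen]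
    · obtain ⟨q, hq⟩ := (Reachable.exists_walk_length_eq_dist ⟨L⟩)
      calc G.dist u' w' ≤ q.length := dist_fst_le_walk_length G H hG q
        _ = _ := hq
  have hmem : (v', b2) ∈ L.support := by
    rw [hL, Walk.mem_support_append_iff]
    exact Or.inl (Walk.end_mem_support _)
  exact hS _ hu'S _ hv'S _ hw'S
    (by simp [Prod.ext_iff]; intro h; exact absurd h huv)
    (by simp [Prod.ext_iff]; intro h; exact absurd h hvw)
    (by simp [Prod.ext_iff]; intro h; exact absurd h huw)
    ⟨L, by rw [hdist, hLlen, hplen], hmem⟩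
end
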